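/- Let f be analytic on the unit disk 𝔻 = {z ∈ ℂ : |z| < 1} with f(0) = 0, f'(0) = 1 and f'(z) ≠ 0 for all z ∈ 𝔻. Suppose f is convex, i.e. Re(1 + z f''(z)/f'(z)) > 0 for all z ∈ 𝔻. Then the hyperbolic sup-norm of the Schwarzian derivative satisfies ‖S_f‖ = sup_{z∈𝔻} (1−|z|²)² |S_f(z)| ≤ 2. -/

import Mathlib

open Metric
open Complex Filter

private lemma sk_normSq_key (a w : ℂ) :
    normSq (1 - (starRingEnd ℂ) a * w) - normSq (w - a) = (1 - normSq a) * (1 - normSq w) := by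
  simp only [normSq_apply, sub_re, sub_im, one_re, one_im, mul_re, mul_im, conj_re, conj_im]
  ring

private lemma sk_den_ne {a w : ℂ} (ha : ‖a‖ < 1) (hw : ‖w‖ < 1) :
    (1 : ℂ) - (starRingEnd ℂ) a * w ≠ 0 := by
  intro H
  have h1 : (starRingEnd ℂ) a * w = 1 := by linear_combination -H
  have h2 : ‖(starRingEnd ℂ) a * w‖ = ‖a‖ * ‖w‖ := by
    rw [norm_mul, Complex.norm_conj]
  rw [h1] at h2
  simp at h2
  nlinarith [norm_nonneg a, norm_nonneg w]

private lemma sk_mobius_lt {a w : ℂ} (ha : ‖a‖ < 1) (hw : ‖w‖ < 1) :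
    ‖(w - a) / (1 - (starRingEnd ℂ) a * w)‖ < 1 := by
  rw [norm_div, div_lt_one (norm_pos_iff.mpr (sk_den_ne ha hw))]
  have hkey := sk_normSq_key a w
  have ha' : normSq a < 1 := by rw [← Complex.sq_norm]; nlinarith [norm_nonneg a]
  have hw' : normSq w < 1 := by rw [← Complex.sq_norm]; nlinarith [norm_nonneg w]
  have : normSq (w - a) < normSq (1 - (starRingEnd ℂ) a * w) := by nlinarith
  rw [Complex.norm_def, Complex.norm_def]
  exact Real.sqrt_lt_sqrt (normSq_nonneg _) this

private lemma sk_schwarz_pick {h : ℂ → ℂ} (hd : DifferentiableOn ℂ h (ball 0 1))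
    (hb : ∀ z ∈ ball (0:ℂ) 1, ‖h z‖ ≤ 1) {z0 : ℂ} (hz0 : z0 ∈ ball (0:ℂ) 1) :
    ‖deriv h z0‖ * (1 - ‖z0‖ ^ 2) ≤ 1 - ‖h z0‖ ^ 2 := by
  have hr : ‖z0‖ < 1 := mem_ball_zero_iff.1 hz0
  have hhz0 : ‖h z0‖ ≤ 1 := hb z0 hz0
  have key : ∀ t : ℝ, 0 < t → t < 1 →
      t * (‖deriv h z0‖ * (1 - ‖z0‖ ^ 2))
        ≤ 1 - t ^ 2 * ‖h z0‖ ^ 2 := by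
    intro t ht0 ht1
    set a : ℂ := (t : ℂ) * h z0 with ha_def
    have haabs : ‖a‖ ≤ t := by
      rw [ha_def, norm_mul, Complex.norm_real, Real.norm_eq_abs, abs_of_pos ht0]
      nlinarith [norm_nonneg (h z0)]
    have ha1 : ‖a‖ < 1 := lt_of_le_of_lt haabs ht1
    set μ : ℂ → ℂ := fun ζ => (ζ + z0) / (1 + (starRingEnd ℂ) z0 * ζ) with hμ_def
    have hz0n : ‖-z0‖ < 1 := by simpa using hr
    have hμden : ∀ ζ ∈ ball (0:ℂ) 1, (1 : ℂ) + (starRingEnd ℂ) z0 * ζ ≠ 0 := by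
      intro ζ hζ
      have := sk_den_ne hz0n (mem_ball_zero_iff.1 hζ)
      simpa [map_neg, neg_mul, sub_neg_eq_add] using this
    have hμmem : ∀ ζ ∈ ball (0:ℂ) 1, μ ζ ∈ ball (0:ℂ) 1 := by
      intro ζ hζ
      rw [mem_ball_zero_iff]
      have := sk_mobius_lt hz0n (mem_ball_zero_iff.1 hζ)
      simpa [hμ_def, map_neg, neg_mul, sub_neg_eq_add] using this
    have hμ0 : μ 0 = z0 := by simp [hμ_def]
    set F : ℂ → ℂ := fun ζ =>
      ((t:ℂ) * h (μ ζ) - a) / (1 - (starRingEnd ℂ) a * ((t:ℂ) * h (μ ζ))) with hF_def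
    have hw0lt : ∀ ζ ∈ ball (0:ℂ) 1, ‖(t:ℂ) * h (μ ζ)‖ < 1 := by
      intro ζ hζ
      rw [norm_mul, Complex.norm_real, Real.norm_eq_abs, abs_of_pos ht0]
      nlinarith [hb (μ ζ) (hμmem ζ hζ), norm_nonneg (h (μ ζ))]
    have hμdiff : ∀ ζ ∈ ball (0:ℂ) 1, DifferentiableAt ℂ μ ζ := by
      intro ζ hζ
      exact (differentiableAt_id.add_const z0).div
        ((differentiableAt_const _).add ((differentiableAt_const _).mul differentiableAt_id))
        (hμden ζ hζ)
    have hcompdiff : ∀ ζ ∈ ball (0:ℂ) 1, DifferentiableAt ℂ (fun ζ => (t:ℂ) * h (μ ζ)) ζ := by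
      intro ζ hζ
      exact ((hd.differentiableAt (isOpen_ball.mem_nhds (hμmem ζ hζ))).comp ζ
        (hμdiff ζ hζ)).const_mul _
    have hFd : DifferentiableOn ℂ F (ball 0 1) := by
      intro ζ hζ
      have hden : (1 : ℂ) - (starRingEnd ℂ) a * ((t:ℂ) * h (μ ζ)) ≠ 0 :=
        sk_den_ne ha1 (hw0lt ζ hζ)
      exact (((hcompdiff ζ hζ).sub_const a).div
        (((hcompdiff ζ hζ).const_mul _).const_sub 1) hden).differentiableWithinAt
    have hF0 : F 0 = 0 := by
      simp [hF_def, hμ0, ← ha_def]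
    have hFmaps : Set.MapsTo F (ball (0:ℂ) 1) (ball (F 0) 1) := by
      rw [hF0]
      intro ζ hζ
      rw [mem_ball_zero_iff]
      exact sk_mobius_lt ha1 (hw0lt ζ hζ)
    have hSch : ‖deriv F 0‖ ≤ 1 := by
      simpa using Complex.norm_deriv_le_div_of_mapsTo_ball hFd (hFmaps.mono_right ball_subset_closedBall) one_pos
    -- compute deriv F 0
    have hμder : HasDerivAt μ (1 - (normSq z0 : ℂ)) 0 := by
      have h1 : HasDerivAt (fun ζ : ℂ => ζ + z0) 1 0 := (hasDerivAt_id 0).add_const z0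
      have h2 : HasDerivAt (fun ζ : ℂ => 1 + (starRingEnd ℂ) z0 * ζ) ((starRingEnd ℂ) z0) 0 := by
        simpa using ((hasDerivAt_id 0).const_mul ((starRingEnd ℂ) z0)).const_add 1
      have h3 := h1.div h2 (hμden 0 (mem_ball_self one_pos))
      rw [hμ_def]
      refine h3.congr_deriv ?_
      rw [← Complex.mul_conj]
      ring
    have hhz : HasDerivAt h (deriv h z0) (μ 0) := by
      rw [hμ0]
      exact (hd.differentiableAt (isOpen_ball.mem_nhds hz0)).hasDerivAt
    have hcomp : HasDerivAt (fun ζ => h (μ ζ)) (deriv h z0 * (1 - (normSq z0 : ℂ))) 0 := by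
      simpa [Function.comp_def] using HasDerivAt.comp 0 hhz hμder
    set D : ℂ := (t:ℂ) * (deriv h z0 * (1 - (normSq z0 : ℂ))) with hD_def
    have hnum : HasDerivAt (fun ζ => (t:ℂ) * h (μ ζ) - a) D 0 :=
      (hcomp.const_mul _).sub_const a
    have hden : HasDerivAt (fun ζ => 1 - (starRingEnd ℂ) a * ((t:ℂ) * h (μ ζ)))
        (-((starRingEnd ℂ) a * D)) 0 := by
      exact ((hcomp.const_mul ((t:ℂ))).const_mul _).const_sub 1
    have hg0 : (1 : ℂ) - (starRingEnd ℂ) a * ((t:ℂ) * h (μ 0)) = ((1 - normSq a : ℝ) : ℂ) := by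
      rw [hμ0, ← ha_def, ← Complex.normSq_eq_conj_mul_self]
      push_cast
      ring
    have hg0ne : (1 : ℂ) - (starRingEnd ℂ) a * ((t:ℂ) * h (μ 0)) ≠ 0 := by
      rw [hμ0, ← ha_def]
      exact sk_den_ne ha1 ha1
    have hnum0 : (t:ℂ) * h (μ 0) - a = 0 := by rw [hμ0, ← ha_def, sub_self]
    have hFder : HasDerivAt (fun ζ => ((t:ℂ) * h (μ ζ) - a) / (1 - (starRingEnd ℂ) a * ((t:ℂ) * h (μ ζ)))) _ 0 :=
      hnum.div hden hg0ne
    have hne : ((1 - normSq a : ℝ) : ℂ) ≠ 0 := by rw [← hg0]; exact hg0ne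
    have hDF : deriv F 0 = D / ((1 - normSq a : ℝ) : ℂ) := by
      rw [hF_def]
      rw [hFder.deriv, hnum0, hg0, zero_mul, sub_zero, sq]
      rw [mul_div_mul_right _ _ hne]
    have hnsa : normSq a < 1 := by rw [← Complex.sq_norm]; nlinarith [norm_nonneg a]
    have h1c : (1:ℂ) - (normSq z0 : ℂ) = ((1 - normSq z0 : ℝ) : ℂ) := by push_cast; ring
    have hns0 : (0:ℝ) ≤ 1 - normSq z0 := by
      nlinarith [Complex.sq_norm z0, norm_nonneg z0]
    have habsDF : ‖deriv F 0‖
        = t * (‖deriv h z0‖ * (1 - ‖z0‖ ^ 2)) / (1 - normSq a) := by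
      rw [hDF, norm_div, hD_def, norm_mul, norm_mul, h1c, Complex.norm_real, Real.norm_eq_abs, Complex.norm_real, Real.norm_eq_abs,
        Complex.norm_real, Real.norm_eq_abs, _root_.abs_of_pos ht0, _root_.abs_of_nonneg hns0,
        _root_.abs_of_nonneg (by linarith : (0:ℝ) ≤ 1 - normSq a), ← Complex.sq_norm z0]
    have hnsa_eq : normSq a = t ^ 2 * ‖h z0‖ ^ 2 := by
      rw [← Complex.sq_norm, ha_def, norm_mul, Complex.norm_real, Real.norm_eq_abs, abs_of_pos ht0, mul_pow]
    rw [habsDF, hnsa_eq] at hSch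
    rw [div_le_one (by nlinarith)] at hSch
    linarith [hSch]
  -- pass to the limit t → 1⁻
  have hlim : Tendsto (fun t : ℝ => (1 - t ^ 2 * ‖h z0‖ ^ 2)
      - t * (‖deriv h z0‖ * (1 - ‖z0‖ ^ 2))) (nhdsWithin 1 (Set.Iio 1))
      (nhds ((1 - ‖h z0‖ ^ 2) - ‖deriv h z0‖ * (1 - ‖z0‖ ^ 2))) := by
    have : ContinuousAt (fun t : ℝ => (1 - t ^ 2 * ‖h z0‖ ^ 2)
        - t * (‖deriv h z0‖ * (1 - ‖z0‖ ^ 2))) 1 := by fun_prop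
    simpa using this.continuousWithinAt.tendsto
  have hev : ∀ᶠ t : ℝ in nhdsWithin 1 (Set.Iio 1),
      0 ≤ (1 - t ^ 2 * ‖h z0‖ ^ 2)
        - t * (‖deriv h z0‖ * (1 - ‖z0‖ ^ 2)) := by
    filter_upwards [Ioo_mem_nhdsLT_of_mem (show (1:ℝ) ∈ Set.Ioc (1/2) 1 by norm_num)] with t ht
    have := key t (by linarith [ht.1]) ht.2
    linarith
  have := ge_of_tendsto hlim hev
  linarith

private lemma sk_normSq_Q (u w : ℂ) :
    normSq (2 * u + w) - normSq w = 4 * (normSq u + (w * (starRingEnd ℂ) u).re) := by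
  simp only [normSq_apply, add_re, add_im, mul_re, mul_im, conj_re, conj_im]
  norm_num
  ring

set_option maxHeartbeats 1000000 in
/-- Schwarzian norm estimate for convex functions: if `f` is analytic on the unit disk,
normalized, with nonvanishing derivative, and `Re(1 + z f''(z)/f'(z)) > 0` on the disk,
then `(1-|z|²)² |S_f(z)| ≤ 2` for all `z` in the disk. -/
theorem schwarzian_norm_le_of_convex (f : ℂ → ℂ)
    (hf : DifferentiableOn ℂ f (ball (0:ℂ) 1))
    (hf0 : f 0 = 0) (hf1 : deriv f 0 = 1)
    (hf' : ∀ z ∈ ball (0:ℂ) 1, deriv f z ≠ 0)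
    (hconv : ∀ z ∈ ball (0:ℂ) 1, 0 < (1 + z * deriv (deriv f) z / deriv f z).re) :
    ∀ z ∈ ball (0:ℂ) 1,
      (1 - ‖z‖ ^ 2) ^ 2 *
        ‖deriv (deriv (deriv f)) z / deriv f z
          - (3 / 2) * (deriv (deriv f) z / deriv f z) ^ 2‖ ≤ 2 := by
  have ha0 : AnalyticOnNhd ℂ f (ball 0 1) := hf.analyticOnNhd isOpen_ball
  have ha1 : AnalyticOnNhd ℂ (deriv f) (ball 0 1) := ha0.deriv
  have ha2 : AnalyticOnNhd ℂ (deriv (deriv f)) (ball 0 1) := ha1.deriv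
  set A : ℂ → ℂ := deriv f with hA_def
  set B : ℂ → ℂ := deriv (deriv f) with hB_def
  set C : ℂ → ℂ := deriv (deriv (deriv f)) with hC_def
  set Q : ℂ → ℂ := fun w => 2 * A w + w * B w with hQ_def
  have hQne : ∀ w ∈ ball (0:ℂ) 1, Q w ≠ 0 := by
    intro w hw hQ0
    have hAw := hf' w hw
    have h1 : w * B w / A w = -2 := by
      have h2 : w * B w = -2 * A w := by
        have : 2 * A w + w * B w = 0 := hQ0
        linear_combination this
      rw [h2]
      field_simp
    have h3 := hconv w hw
    rw [h1] at h3
    norm_num at h3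
  set h : ℂ → ℂ := fun w => B w / Q w with hh_def
  have hQdiff : DifferentiableOn ℂ Q (ball 0 1) :=
    (ha1.differentiableOn.const_mul 2).add (differentiableOn_id.mul ha2.differentiableOn)
  have hhdiff : DifferentiableOn ℂ h (ball 0 1) :=
    ha2.differentiableOn.div hQdiff hQne
  set g : ℂ → ℂ := fun w => w * h w with hg_def
  have hgdiff : DifferentiableOn ℂ g (ball 0 1) := differentiableOn_id.mul hhdiff
  -- |g| < 1 on the ball
  have hglt : Set.MapsTo g (ball (0:ℂ) 1) (ball (0:ℂ) 1) := by
    intro w hw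
    rw [mem_ball_zero_iff]
    have hAw := hf' w hw
    have hns : 0 < normSq (A w) := Complex.normSq_pos.2 hAw
    -- positivity from convexity
    have hpos : 0 < normSq (A w) + ((w * B w) * (starRingEnd ℂ) (A w)).re := by
      have h3 := hconv w hw
      rw [Complex.add_re, Complex.one_re, Complex.div_re] at h3
      have hre : ((w * B w) * (starRingEnd ℂ) (A w)).re
          = (w * B w).re * (A w).re + (w * B w).im * (A w).im := by
        simp [Complex.mul_re, Complex.conj_re, Complex.conj_im]
        try ring
      rw [hre]
      have h4 : (0:ℝ) < (1 + ((w * B w).re * (A w).re / normSq (A w)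
          + (w * B w).im * (A w).im / normSq (A w))) * normSq (A w) := by
        apply mul_pos _ hns
        convert h3 using 2
      calc (0:ℝ) < (1 + ((w * B w).re * (A w).re / normSq (A w)
            + (w * B w).im * (A w).im / normSq (A w))) * normSq (A w) := h4
        _ = normSq (A w) + ((w * B w).re * (A w).re + (w * B w).im * (A w).im) := by
            field_simp
    have hid : normSq (Q w) - normSq (w * B w)
        = 4 * (normSq (A w) + ((w * B w) * (starRingEnd ℂ) (A w)).re) := by
      rw [hQ_def]
      exact sk_normSq_Q (A w) (w * B w)
    have hlt : normSq (w * B w) < normSq (Q w) := by nlinarith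
    have hgw : g w = (w * B w) / Q w := by
      rw [hg_def, hh_def]
      ring
    rw [hgw, norm_div, div_lt_one (norm_pos_iff.mpr (hQne w hw))]
    rw [Complex.norm_def, Complex.norm_def]
    exact Real.sqrt_lt_sqrt (normSq_nonneg _) hlt
  have hg0 : g 0 = 0 := by simp [hg_def]
  -- |h| ≤ 1 on the ball
  have hhle : ∀ w ∈ ball (0:ℂ) 1, ‖h w‖ ≤ 1 := by
    intro w hw
    rcases eq_or_ne w 0 with rfl | hw0
    · have hder : HasDerivAt g (h 0) 0 := by
        have := (hasDerivAt_id (0:ℂ)).mul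
          ((hhdiff.differentiableAt (isOpen_ball.mem_nhds (mem_ball_self one_pos))).hasDerivAt)
        exact this.congr_deriv (by simp)
      have := Complex.norm_deriv_le_one_of_mapsTo_ball hgdiff (by rw [hg0]; exact hglt.mono_right ball_subset_closedBall) one_pos
      rwa [hder.deriv] at this
    · have hle := Complex.norm_le_norm_of_mapsTo_ball hgdiff (hglt.mono_right ball_subset_closedBall) hg0 (mem_ball_zero_iff.1 hw)
      rw [hg_def] at hle
      simp only [norm_mul] at hle
      have hwpos : 0 < ‖w‖ := norm_pos_iff.mpr hw0
      exact (mul_le_iff_le_one_right hwpos).1 hle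
  -- Schwarz-Pick
  intro z hz
  have hsp := sk_schwarz_pick hhdiff hhle hz
  -- derivative of h at z
  have hAz : HasDerivAt A (B z) z :=
    (ha1.differentiableOn.differentiableAt (isOpen_ball.mem_nhds hz)).hasDerivAt
  have hBz : HasDerivAt B (C z) z :=
    (ha2.differentiableOn.differentiableAt (isOpen_ball.mem_nhds hz)).hasDerivAt
  have hQz : HasDerivAt Q (3 * B z + z * C z) z := by
    have h1 : HasDerivAt (fun w => 2 * A w) (2 * B z) z := hAz.const_mul 2
    have h2 : HasDerivAt (fun w => w * B w) (1 * B z + z * C z) z := (hasDerivAt_id z).mul hBz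
    have h3 := h1.add h2
    rw [hQ_def]
    refine h3.congr_deriv ?_
    ring
  have hhz : HasDerivAt h ((C z * Q z - B z * (3 * B z + z * C z)) / Q z ^ 2) z :=
    hBz.div hQz (hQne z hz)
  have hnum_eq : C z * Q z - B z * (3 * B z + z * C z) = 2 * A z * C z - 3 * B z ^ 2 := by
    rw [hQ_def]; ring
  have hDh : deriv h z = (2 * A z * C z - 3 * B z ^ 2) / Q z ^ 2 := by
    rw [hhz.deriv, hnum_eq]
  -- the Schwarzian in terms of deriv h
  have hval : C z / A z - 3 / 2 * (B z / A z) ^ 2 = deriv h z * Q z ^ 2 / (2 * A z ^ 2) := by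
    rw [hDh]
    field_simp [hf' z hz, hQne z hz]
  -- 1 - z * h z = 2 * A z / Q z
  have h1zh : (1 : ℂ) - z * h z = 2 * A z / Q z := by
    rw [eq_div_iff (hQne z hz)]
    have hhzv : h z = B z / Q z := rfl
    have hQzv : Q z = 2 * A z + z * B z := rfl
    rw [hhzv, sub_mul, one_mul, mul_assoc, div_mul_cancel₀ _ (hQne z hz), hQzv]
    ring
  -- real endgame
  set r := ‖z‖ with hr_def
  set tt := ‖h z‖ with ht_def
  set α := ‖A z‖ with hα_def
  set ρ := ‖Q z‖ with hρ_def
  set d := ‖deriv h z‖ with hd_def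
  have hr1 : r < 1 := mem_ball_zero_iff.1 hz
  have hr0 : 0 ≤ r := norm_nonneg z
  have ht1 : tt ≤ 1 := hhle z hz
  have ht0 : 0 ≤ tt := norm_nonneg _
  have hρ0 : 0 < ρ := norm_pos_iff.mpr (hQne z hz)
  have hα0 : 0 < α := norm_pos_iff.mpr (hf' z hz)
  have hd0 : 0 ≤ d := norm_nonneg _
  have habs1zh : ‖1 - z * h z‖ = 2 * α / ρ := by
    rw [h1zh, norm_div, norm_mul]
    norm_num
    rfl
  have hlow : 1 - r * tt ≤ 2 * α / ρ := by
    rw [← habs1zh]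
    have hn := norm_sub_norm_le (1 : ℂ) (z * h z)
    simp only [norm_mul, norm_one] at hn
    simpa using hn
  rw [hval]
  have habs : ‖deriv h z * Q z ^ 2 / (2 * A z ^ 2)‖ = d * ρ ^ 2 / (2 * α ^ 2) := by
    rw [norm_div, norm_mul, norm_mul, norm_pow, norm_pow]
    norm_num
    rfl
  rw [habs]
  clear_value r tt α ρ d
  have hrt0 : 0 ≤ 1 - r * tt := by nlinarith
  have e1 : (1 - r * tt) ^ 2 * ρ ^ 2 ≤ (2 * α) ^ 2 := by
    have h6 := pow_le_pow_left₀ hrt0 hlow 2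
    rw [div_pow, le_div_iff₀ (by positivity)] at h6
    exact h6
  have e2 : (1 - r ^ 2) * (1 - tt ^ 2) ≤ (1 - r * tt) ^ 2 := by nlinarith [sq_nonneg (r - tt)]
  have h1r2 : (0:ℝ) ≤ 1 - r ^ 2 := by nlinarith
  have key2 : (1 - r ^ 2) ^ 2 * d * ρ ^ 2 ≤ 4 * α ^ 2 := by
    have t1 := mul_le_mul_of_nonneg_right (mul_le_mul_of_nonneg_right hsp h1r2) (sq_nonneg ρ)
    have t2 := mul_le_mul_of_nonneg_right e2 (sq_nonneg ρ)
    nlinarith [t1, t2, e1]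
  have hform : (1 - r ^ 2) ^ 2 * (d * ρ ^ 2 / (2 * α ^ 2))
      = ((1 - r ^ 2) ^ 2 * d * ρ ^ 2) / (2 * α ^ 2) := by ring
  rw [hform, div_le_iff₀ (by positivity)]
  nlinarith [key2]
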